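/- Let n be divisible by 6 and let Q_i = (b/n)e^{-(i/n)²} be the discrete Gaussian-like log-concave distribution on {1,...,n} with normalizer b. Let δ_1,...,δ_{n/6} be reals with 0 ≤ δ_i ≤ C_i/n³ for every i, where C_i = n³(Q_{6i-1} - √(Q_{6i}Q_{6i-2})). Define p by p_{6i-4} = Q_{6i-4} + δ_i, p_{6i-1} = Q_{6i-1} - δ_i, and p_j = Q_j otherwise. Then for n sufficiently large, p is a log-concave probability distribution on {1,...,n}: p_j > 0 for all j, ∑_j p_j = 1, and p_j² ≥ p_{j-1}p_{j+1} for all 2 ≤ j ≤ n-1. -/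

import Mathlib

open Finset Real

private lemma exp_kernel_aux (N x : ℝ) (hN : N ≠ 0) :
    Real.exp (-(x/N)^2) * Real.exp (-((x+2)/N)^2)
      = (Real.exp (-((x+1)/N)^2))^2 * (Real.exp (-1/N^2))^2 := by
  calc Real.exp (-(x/N)^2) * Real.exp (-((x+2)/N)^2)
      = Real.exp (-(x/N)^2 + -((x+2)/N)^2) := (Real.exp_add _ _).symm
    _ = Real.exp ((-((x+1)/N)^2 + -((x+1)/N)^2) + (-1/N^2 + -1/N^2)) := by
        congr 1; field_simp; ring
    _ = (Real.exp (-((x+1)/N)^2))^2 * (Real.exp (-1/N^2))^2 := by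
        rw [Real.exp_add, Real.exp_add, Real.exp_add]; ring

set_option maxHeartbeats 2000000 in
theorem perturbed_gaussian_log_concave :
    ∃ N : ℕ, ∀ n : ℕ, N ≤ n → 6 ∣ n →
    ∀ b : ℝ, b = (n : ℝ) / ∑ j ∈ Finset.Icc 1 n, Real.exp (-((j : ℝ) / n) ^ 2) →
    ∀ Q : ℕ → ℝ, (∀ i, Q i = (b / n) * Real.exp (-((i : ℝ) / n) ^ 2)) →
    ∀ C : ℕ → ℝ,
      (∀ i, C i = (n : ℝ) ^ 3 * (Q (6 * i - 1) - Real.sqrt (Q (6 * i) * Q (6 * i - 2)))) →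
    ∀ δ : ℕ → ℝ, (∀ i ∈ Finset.Icc 1 (n / 6), 0 ≤ δ i ∧ δ i ≤ C i / (n : ℝ) ^ 3) →
    ∀ p : ℕ → ℝ,
      (∀ i ∈ Finset.Icc 1 (n / 6),
        p (6 * i - 4) = Q (6 * i - 4) + δ i ∧ p (6 * i - 1) = Q (6 * i - 1) - δ i) →
      (∀ j ∈ Finset.Icc 1 n,
        (¬ ∃ i ∈ Finset.Icc 1 (n / 6), j = 6 * i - 4 ∨ j = 6 * i - 1) → p j = Q j) →
    (∀ j ∈ Finset.Icc 1 n, 0 < p j) ∧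
    (∑ j ∈ Finset.Icc 1 n, p j = 1) ∧
    (∀ j : ℕ, 2 ≤ j → j ≤ n - 1 → p (j - 1) * p (j + 1) ≤ (p j) ^ 2) := by
  refine ⟨6, ?_⟩
  intro n hn hdvd b hb Q hQ C hC δ hδ p hp1 hp2
  obtain ⟨m, rfl⟩ := hdvd
  have hm1 : 1 ≤ m := by omega
  have hnpos : (0:ℝ) < ((6*m : ℕ) : ℝ) := by
    have : (0:ℕ) < 6*m := by omega
    exact_mod_cast this
  have hn0 : ((6*m : ℕ) : ℝ) ≠ 0 := ne_of_gt hnpos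
  have hS : 0 < ∑ j ∈ Finset.Icc 1 (6*m), Real.exp (-((j : ℝ) / ((6*m:ℕ):ℝ)) ^ 2) := by
    apply Finset.sum_pos (fun j _ => Real.exp_pos _)
    exact ⟨1, by simp only [Finset.mem_Icc]; omega⟩
  have hbpos : 0 < b := by rw [hb]; exact div_pos hnpos hS
  have hQpos : ∀ j : ℕ, 0 < Q j := by
    intro j; rw [hQ]; exact mul_pos (div_pos hbpos hnpos) (Real.exp_pos _)
  have hQmono : ∀ j k : ℕ, j ≤ k → Q k ≤ Q j := by
    intro j k hjk
    rw [hQ, hQ]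
    apply mul_le_mul_of_nonneg_left _ (div_pos hbpos hnpos).le
    apply Real.exp_le_exp.mpr
    have hjk' : (j:ℝ) ≤ (k:ℝ) := by exact_mod_cast hjk
    have h1 : ((j:ℝ)/((6*m:ℕ):ℝ))^2 ≤ ((k:ℝ)/((6*m:ℕ):ℝ))^2 := by gcongr
    linarith
  set u : ℝ := Real.exp (-1/((6*m:ℕ):ℝ)^2) with hu_def
  have hu_pos : 0 < u := Real.exp_pos _
  have hu_le : u ≤ 1 := by
    rw [hu_def]
    apply Real.exp_le_one_iff.mpr
    rw [neg_div]
    simp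

  have hkernel : ∀ j : ℕ, 1 ≤ j → Q (j-1) * Q (j+1) = Q j ^ 2 * u ^ 2 := by
    intro j hj
    obtain ⟨k, rfl⟩ : ∃ k, j = k + 1 := ⟨j-1, by omega⟩
    simp only [Nat.add_sub_cancel]
    rw [hQ, hQ, hQ, hu_def]
    have c1 : ((k+1+1:ℕ):ℝ) = (k:ℝ)+2 := by push_cast; ring
    have c2 : ((k+1:ℕ):ℝ) = (k:ℝ)+1 := by push_cast; ring
    rw [c1, c2]
    linear_combination (b/((6*m:ℕ):ℝ))^2 * exp_kernel_aux ((6*m:ℕ):ℝ) (k:ℝ) hn0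
  have hsqrt : ∀ i : ℕ, 1 ≤ i → Real.sqrt (Q (6*i) * Q (6*i-2)) = Q (6*i-1) * u := by
    intro i hi
    have h1 : 6*i-1+1 = 6*i := by omega
    have h2 : 6*i-1-1 = 6*i-2 := by omega
    have hk := hkernel (6*i-1) (by omega)
    rw [h1, h2] at hk
    rw [show Q (6*i) * Q (6*i-2) = (Q (6*i-1) * u)^2 by linear_combination hk]
    exact Real.sqrt_sq (mul_nonneg (hQpos _).le hu_pos.le)
  have hdelta : ∀ i : ℕ, 1 ≤ i → i ≤ m → 0 ≤ δ i ∧ δ i ≤ Q (6*i-1) * (1-u) := by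
    intro i h1 h2
    obtain ⟨hd0, hd1⟩ := hδ i (by simp only [Finset.mem_Icc]; omega)
    refine ⟨hd0, ?_⟩
    rw [hC i, hsqrt i h1] at hd1
    rw [mul_div_cancel_left₀ _ (by positivity : ((6*m:ℕ):ℝ)^3 ≠ 0)] at hd1
    have : Q (6*i-1)*(1-u) = Q (6*i-1) - Q (6*i-1)*u := by ring
    linarith
  have hperturb : ∀ i : ℕ, 1 ≤ i → i ≤ m →
      p (6*i-4) = Q (6*i-4) + δ i ∧ p (6*i-1) = Q (6*i-1) - δ i := by
    intro i h1 h2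
    exact hp1 i (by simp only [Finset.mem_Icc]; omega)
  have hpQ : ∀ j : ℕ, 1 ≤ j → j ≤ 6*m → j % 6 ≠ 2 → j % 6 ≠ 5 → p j = Q j := by
    intro j h1 h2 h3 h4
    apply hp2 j (by simp only [Finset.mem_Icc]; omega)
    rintro ⟨i, hi, hij | hij⟩ <;> simp only [Finset.mem_Icc] at hi <;> omega
  have huu : u^2 ≤ 1 := by nlinarith
  constructor
  · -- positivity
    intro j hj
    simp only [Finset.mem_Icc] at hj
    obtain ⟨hj1, hj2⟩ := hj
    by_cases h2 : j % 6 = 2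
    · obtain ⟨i, ei, hi1, hi2⟩ : ∃ i, j = 6*i-4 ∧ 1 ≤ i ∧ i ≤ m :=
        ⟨(j+4)/6, by omega, by omega, by omega⟩
      have hpj : p j = Q j + δ i := by rw [ei]; exact (hperturb i hi1 hi2).1
      have := (hdelta i hi1 hi2).1
      have := hQpos j
      rw [hpj]; linarith
    by_cases h5 : j % 6 = 5
    · obtain ⟨i, ei, hi1, hi2⟩ : ∃ i, j = 6*i-1 ∧ 1 ≤ i ∧ i ≤ m :=
        ⟨(j+1)/6, by omega, by omega, by omega⟩
      have hpj : p j = Q j - δ i := by rw [ei]; exact (hperturb i hi1 hi2).2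
      obtain ⟨hd0, hd1⟩ := hdelta i hi1 hi2
      rw [← ei] at hd1
      have hq := hQpos j
      rw [hpj]
      nlinarith [mul_pos hq hu_pos]
    · rw [hpQ j hj1 hj2 h2 h5]; exact hQpos j
  constructor
  · -- sum
    have key : ∀ k : ℕ, k ≤ m →
        ∑ j ∈ Finset.Icc 1 (6*k), p j = ∑ j ∈ Finset.Icc 1 (6*k), Q j := by
      intro k
      induction k with
      | zero => intro _; simp
      | succ k ih =>
        intro hk
        have ihk := ih (by omega)
        have expand : ∀ f : ℕ → ℝ, ∑ j ∈ Finset.Icc 1 (6*(k+1)), f j =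
            (∑ j ∈ Finset.Icc 1 (6*k), f j) + f (6*k+1) + f (6*k+2) + f (6*k+3)
              + f (6*k+4) + f (6*k+5) + f (6*k+6) := by
          intro f
          rw [show 6*(k+1) = (6*k+5)+1 from by ring, Finset.sum_Icc_succ_top (by omega)]
          rw [show 6*k+5 = (6*k+4)+1 from by ring, Finset.sum_Icc_succ_top (by omega)]
          rw [show 6*k+4 = (6*k+3)+1 from by ring, Finset.sum_Icc_succ_top (by omega)]
          rw [show 6*k+3 = (6*k+2)+1 from by ring, Finset.sum_Icc_succ_top (by omega)]
          rw [show 6*k+2 = (6*k+1)+1 from by ring, Finset.sum_Icc_succ_top (by omega)]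
          rw [Finset.sum_Icc_succ_top (by omega : 1 ≤ 6*k+1)]
          try ring
        rw [expand p, expand Q, ihk]
        have h1 : p (6*k+1) = Q (6*k+1) := hpQ _ (by omega) (by omega) (by omega) (by omega)
        have h3 : p (6*k+3) = Q (6*k+3) := hpQ _ (by omega) (by omega) (by omega) (by omega)
        have h4 : p (6*k+4) = Q (6*k+4) := hpQ _ (by omega) (by omega) (by omega) (by omega)
        have h6 : p (6*k+6) = Q (6*k+6) := hpQ _ (by omega) (by omega) (by omega) (by omega)
        have hpp := hperturb (k+1) (by omega) (by omega)
        have e2 : 6*(k+1)-4 = 6*k+2 := by omega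
        have e5 : 6*(k+1)-1 = 6*k+5 := by omega
        rw [e2, e5] at hpp
        rw [h1, h3, h4, h6, hpp.1, hpp.2]
        ring
    rw [key m le_rfl]
    rw [Finset.sum_congr rfl (fun j _ => hQ j), ← Finset.mul_sum, hb]
    have haux : ∀ x y : ℝ, x ≠ 0 → y ≠ 0 → (x / y) / x * y = 1 := by
      intro x y hx hy
      field_simp
    exact haux _ _ hn0 hS.ne'
  · -- log-concavity
    intro j hj2 hjn
    have hj6 : j + 1 ≤ 6*m := by omega
    rcases (by omega : j % 6 = 0 ∨ j % 6 = 1 ∨ j % 6 = 2 ∨ j % 6 = 3 ∨ j % 6 = 4 ∨ j % 6 = 5)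
      with h|h|h|h|h|h
    · -- j ≡ 0 : left neighbor decreased
      obtain ⟨i, ei, hi1, hi2⟩ : ∃ i, j - 1 = 6*i-1 ∧ 1 ≤ i ∧ i ≤ m :=
        ⟨j/6, by omega, by omega, by omega⟩
      have hpjm : p (j-1) = Q (j-1) - δ i := by rw [ei]; exact (hperturb i hi1 hi2).2
      have hpj : p j = Q j := hpQ j (by omega) (by omega) (by omega) (by omega)
      have hpjp : p (j+1) = Q (j+1) := hpQ _ (by omega) (by omega) (by omega) (by omega)
      rw [hpjm, hpj, hpjp]
      have hk := hkernel j (by omega)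
      obtain ⟨hd0, hd1⟩ := hdelta i hi1 hi2
      rw [← ei] at hd1
      have hb2 := hQpos (j+1)
      have hfin : Q j^2 * u^2 ≤ Q j^2 := by nlinarith [sq_nonneg (Q j)]
      nlinarith [mul_nonneg hd0 hb2.le]
    · -- j ≡ 1 : right neighbor increased (hard case)
      obtain ⟨i, ei, ei2, hi1, hi2⟩ : ∃ i, j + 1 = 6*i-4 ∧ 6*i-1 = j+4 ∧ 1 ≤ i ∧ i ≤ m :=
        ⟨(j+5)/6, by omega, by omega, by omega, by omega⟩
      have hpjp : p (j+1) = Q (j+1) + δ i := by rw [ei]; exact (hperturb i hi1 hi2).1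
      have hpj : p j = Q j := hpQ j (by omega) (by omega) (by omega) (by omega)
      have hpjm : p (j-1) = Q (j-1) := hpQ _ (by omega) (by omega) (by omega) (by omega)
      rw [hpjm, hpj, hpjp]
      have hk := hkernel j (by omega)
      obtain ⟨hd0, hd1⟩ := hdelta i hi1 hi2
      rw [ei2] at hd1
      have hmo : Q (j+4) ≤ Q (j+1) := hQmono _ _ (by omega)
      have hd2 : δ i ≤ Q (j+1) * (1-u) :=
        le_trans hd1 (mul_le_mul_of_nonneg_right hmo (by linarith))
      have hcube : u^2*(2-u) ≤ 1 := by nlinarith [sq_nonneg (1-u), sq_nonneg u]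
      have hstep : Q (j-1) * (Q (j+1) + δ i) ≤ Q (j-1) * Q (j+1) * (2 - u) := by
        have := mul_le_mul_of_nonneg_left hd2 (hQpos (j-1)).le
        nlinarith [this]
      have hfin : Q (j-1) * Q (j+1) * (2-u) ≤ Q j^2 := by
        rw [hk]
        have h9 : 0 ≤ Q j^2 * (1 - u^2*(2-u)) := mul_nonneg (sq_nonneg _) (by linarith)
        nlinarith [h9]
      linarith
    · -- j ≡ 2 : j itself increased
      obtain ⟨i, ei, hi1, hi2⟩ : ∃ i, j = 6*i-4 ∧ 1 ≤ i ∧ i ≤ m :=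
        ⟨(j+4)/6, by omega, by omega, by omega⟩
      have hpj : p j = Q j + δ i := by rw [ei]; exact (hperturb i hi1 hi2).1
      have hpjm : p (j-1) = Q (j-1) := hpQ _ (by omega) (by omega) (by omega) (by omega)
      have hpjp : p (j+1) = Q (j+1) := hpQ _ (by omega) (by omega) (by omega) (by omega)
      rw [hpjm, hpj, hpjp]
      have hk := hkernel j (by omega)
      have hd0 := (hdelta i hi1 hi2).1
      have hq := hQpos j
      nlinarith [sq_nonneg (Q j), sq_nonneg (δ i), mul_nonneg hq.le hd0]
    · -- j ≡ 3 : left neighbor increased (hard case)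
      obtain ⟨i, ei, ei2, hi1, hi2⟩ : ∃ i, j - 1 = 6*i-4 ∧ 6*i-1 = j+2 ∧ 1 ≤ i ∧ i ≤ m :=
        ⟨(j+3)/6, by omega, by omega, by omega, by omega⟩
      have hpjm : p (j-1) = Q (j-1) + δ i := by rw [ei]; exact (hperturb i hi1 hi2).1
      have hpj : p j = Q j := hpQ j (by omega) (by omega) (by omega) (by omega)
      have hpjp : p (j+1) = Q (j+1) := hpQ _ (by omega) (by omega) (by omega) (by omega)
      rw [hpjm, hpj, hpjp]
      have hk := hkernel j (by omega)
      obtain ⟨hd0, hd1⟩ := hdelta i hi1 hi2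
      rw [ei2] at hd1
      have hmo : Q (j+2) ≤ Q (j-1) := hQmono _ _ (by omega)
      have hd2 : δ i ≤ Q (j-1) * (1-u) :=
        le_trans hd1 (mul_le_mul_of_nonneg_right hmo (by linarith))
      have hcube : u^2*(2-u) ≤ 1 := by nlinarith [sq_nonneg (1-u), sq_nonneg u]
      have hstep : (Q (j-1) + δ i) * Q (j+1) ≤ Q (j-1) * Q (j+1) * (2 - u) := by
        have := mul_le_mul_of_nonneg_right hd2 (hQpos (j+1)).le
        nlinarith [this]
      have hfin : Q (j-1) * Q (j+1) * (2-u) ≤ Q j^2 := by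
        rw [hk]
        have h9 : 0 ≤ Q j^2 * (1 - u^2*(2-u)) := mul_nonneg (sq_nonneg _) (by linarith)
        nlinarith [h9]
      linarith
    · -- j ≡ 4 : right neighbor decreased
      obtain ⟨i, ei, hi1, hi2⟩ : ∃ i, j + 1 = 6*i-1 ∧ 1 ≤ i ∧ i ≤ m :=
        ⟨(j+2)/6, by omega, by omega, by omega⟩
      have hpjp : p (j+1) = Q (j+1) - δ i := by rw [ei]; exact (hperturb i hi1 hi2).2
      have hpj : p j = Q j := hpQ j (by omega) (by omega) (by omega) (by omega)
      have hpjm : p (j-1) = Q (j-1) := hpQ _ (by omega) (by omega) (by omega) (by omega)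
      rw [hpjm, hpj, hpjp]
      have hk := hkernel j (by omega)
      obtain ⟨hd0, hd1⟩ := hdelta i hi1 hi2
      rw [← ei] at hd1
      have hb1 := hQpos (j-1)
      have hfin : Q j^2 * u^2 ≤ Q j^2 := by nlinarith [sq_nonneg (Q j)]
      nlinarith [mul_nonneg hb1.le hd0]
    · -- j ≡ 5 : j itself decreased
      obtain ⟨i, ei, hi1, hi2⟩ : ∃ i, j = 6*i-1 ∧ 1 ≤ i ∧ i ≤ m :=
        ⟨(j+1)/6, by omega, by omega, by omega⟩
      have hpj : p j = Q j - δ i := by rw [ei]; exact (hperturb i hi1 hi2).2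
      have hpjm : p (j-1) = Q (j-1) := hpQ _ (by omega) (by omega) (by omega) (by omega)
      have hpjp : p (j+1) = Q (j+1) := hpQ _ (by omega) (by omega) (by omega) (by omega)
      rw [hpjm, hpj, hpjp]
      have hk := hkernel j (by omega)
      obtain ⟨hd0, hd1⟩ := hdelta i hi1 hi2
      rw [← ei] at hd1
      have hq := hQpos j
      have h1 : Q j * u ≤ Q j - δ i := by nlinarith
      have h2 : (0:ℝ) ≤ Q j * u := mul_nonneg hq.le hu_pos.le
      have h3 : (Q j * u)^2 ≤ (Q j - δ i)^2 := by nlinarith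
      nlinarith [hk]
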